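/- The kernel of the representation of g on h5 ⊕ a1 = span{E3,E31,E32,A3,A31,A32} obtained by restricting the adjoint action (i.e., {x ∈ g : [x,y] = 0 for all y ∈ h5 ⊕ a1}) is trivial. -/

import Mathlib

open Matrix

attribute [local instance 100] LieRing.ofAssociativeRing

abbrev M6 := Matrix (Fin 6) (Fin 6) ℝ

noncomputable def E1 : M6 := !![0,0,0,1,0,0; 0,0,0,0,0,0; 0,0,0,0,0,0; 0,0,0,0,0,0; 0,0,0,0,0,0; 0,0,0,0,0,0]
noncomputable def E2 : M6 := !![0,0,0,0,0,0; 0,0,0,0,1,0; 0,0,0,0,0,0; 0,0,0,0,0,0; 0,0,0,0,0,0; 0,0,0,0,0,0]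
noncomputable def E3 : M6 := !![0,0,0,0,0,0; 0,0,0,0,0,0; 0,0,0,0,0,1; 0,0,0,0,0,0; 0,0,0,0,0,0; 0,0,0,0,0,0]
noncomputable def E31 : M6 := !![0,0,0,0,0,1; 0,0,0,0,0,0; 0,0,0,1,0,0; 0,0,0,0,0,0; 0,0,0,0,0,0; 0,0,0,0,0,0]
noncomputable def E32 : M6 := !![0,0,0,0,0,0; 0,0,0,0,0,1; 0,0,0,0,1,0; 0,0,0,0,0,0; 0,0,0,0,0,0; 0,0,0,0,0,0]
noncomputable def A1 : M6 := !![(1/2),0,0,0,0,0; 0,0,0,0,0,0; 0,0,0,0,0,0; 0,0,0,(-1/2),0,0; 0,0,0,0,0,0; 0,0,0,0,0,0]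
noncomputable def A2 : M6 := !![0,0,0,0,0,0; 0,(1/2),0,0,0,0; 0,0,0,0,0,0; 0,0,0,0,0,0; 0,0,0,0,(-1/2),0; 0,0,0,0,0,0]
noncomputable def A3 : M6 := !![0,0,0,0,0,0; 0,0,0,0,0,0; 0,0,(1/2),0,0,0; 0,0,0,0,0,0; 0,0,0,0,0,0; 0,0,0,0,0,(-1/2)]
noncomputable def A31 : M6 := !![0,0,0,0,0,0; 0,0,0,0,0,0; 1,0,0,0,0,0; 0,0,0,0,0,-1; 0,0,0,0,0,0; 0,0,0,0,0,0]
noncomputable def A32 : M6 := !![0,0,0,0,0,0; 0,0,0,0,0,0; 0,1,0,0,0,0; 0,0,0,0,0,0; 0,0,0,0,0,-1; 0,0,0,0,0,0]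
noncomputable def W1 : M6 := !![0,0,0,-1,0,0; 0,0,0,0,0,0; 0,0,0,0,0,0; 1,0,0,0,0,0; 0,0,0,0,0,0; 0,0,0,0,0,0]
noncomputable def W2 : M6 := !![0,0,0,0,0,0; 0,0,0,0,-1,0; 0,0,0,0,0,0; 0,0,0,0,0,0; 0,1,0,0,0,0; 0,0,0,0,0,0]

noncomputable def gens : Set M6 := {E1, E2, E3, E31, E32, A1, A2, A3, A31, A32, W1, W2}

noncomputable def gLie : LieSubalgebra ℝ M6 := LieSubalgebra.lieSpan ℝ M6 gens

lemma memE1 : E1 ∈ gLie := LieSubalgebra.subset_lieSpan (by simp [gens])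
lemma memE2 : E2 ∈ gLie := LieSubalgebra.subset_lieSpan (by simp [gens])
lemma memE3 : E3 ∈ gLie := LieSubalgebra.subset_lieSpan (by simp [gens])
lemma memE31 : E31 ∈ gLie := LieSubalgebra.subset_lieSpan (by simp [gens])
lemma memE32 : E32 ∈ gLie := LieSubalgebra.subset_lieSpan (by simp [gens])
lemma memA1 : A1 ∈ gLie := LieSubalgebra.subset_lieSpan (by simp [gens])
lemma memA2 : A2 ∈ gLie := LieSubalgebra.subset_lieSpan (by simp [gens])
lemma memA3 : A3 ∈ gLie := LieSubalgebra.subset_lieSpan (by simp [gens])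
lemma memA31 : A31 ∈ gLie := LieSubalgebra.subset_lieSpan (by simp [gens])
lemma memA32 : A32 ∈ gLie := LieSubalgebra.subset_lieSpan (by simp [gens])
lemma memW1 : W1 ∈ gLie := LieSubalgebra.subset_lieSpan (by simp [gens])
lemma memW2 : W2 ∈ gLie := LieSubalgebra.subset_lieSpan (by simp [gens])

noncomputable abbrev gE1 : ↥gLie := ⟨E1, memE1⟩
noncomputable abbrev gE2 : ↥gLie := ⟨E2, memE2⟩
noncomputable abbrev gE3 : ↥gLie := ⟨E3, memE3⟩
noncomputable abbrev gE31 : ↥gLie := ⟨E31, memE31⟩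
noncomputable abbrev gE32 : ↥gLie := ⟨E32, memE32⟩
noncomputable abbrev gA1 : ↥gLie := ⟨A1, memA1⟩
noncomputable abbrev gA2 : ↥gLie := ⟨A2, memA2⟩
noncomputable abbrev gA3 : ↥gLie := ⟨A3, memA3⟩
noncomputable abbrev gA31 : ↥gLie := ⟨A31, memA31⟩
noncomputable abbrev gA32 : ↥gLie := ⟨A32, memA32⟩
noncomputable abbrev gW1 : ↥gLie := ⟨W1, memW1⟩
noncomputable abbrev gW2 : ↥gLie := ⟨W2, memW2⟩

lemma cons_val_five' {α : Type*} {m : ℕ} (x : α) (u : Fin m.succ.succ.succ.succ.succ → α) :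
    Matrix.vecCons x u 5 = Matrix.vecHead (Matrix.vecTail (Matrix.vecTail (Matrix.vecTail (Matrix.vecTail u)))) := rfl

set_option maxHeartbeats 2000000 in
theorem kernel_of_ad_on_h5_plus_a1_is_trivial
    (x : M6) (hx : x ∈ gLie)
    (hker : ∀ y ∈ Submodule.span ℝ ({E3, E31, E32, A3, A31, A32} : Set M6),
      ⁅x, y⁆ = 0) :
    x = 0 := by
  have hsl : x ∈ LieAlgebra.SpecialLinear.sl (Fin 6) ℝ := by
    apply LieSubalgebra.lieSpan_le.mpr ?_ hx
    intro y hy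
    simp only [gens, Set.mem_insert_iff, Set.mem_singleton_iff] at hy
    rcases hy with h|h|h|h|h|h|h|h|h|h|h|h <;> subst h <;>
      · show _ ∈ LinearMap.ker (Matrix.traceLinearMap (Fin 6) ℝ ℝ)
        rw [LinearMap.mem_ker]
        norm_num [Matrix.traceLinearMap, Matrix.trace, Fin.sum_univ_succ,
          E1, E2, E3, E31, E32, A1, A2, A3, A31, A32, W1, W2]
  have htr : x 0 0 + x 1 1 + x 2 2 + x 3 3 + x 4 4 + x 5 5 = 0 := by
    have h : Matrix.trace x = 0 := hsl
    rw [Matrix.trace] at h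
    simpa [Matrix.diag, Fin.sum_univ_six] using h
  have mem6 : ∀ y ∈ ({E3, E31, E32, A3, A31, A32} : Set M6), x * y = y * x := by
    intro y hy
    have := hker y (Submodule.subset_span hy)
    rwa [Ring.lie_def, sub_eq_zero] at this
  have h3 : x * E3 = E3 * x := mem6 E3 (by simp)
  have h31 : x * E31 = E31 * x := mem6 E31 (by simp)
  have h32 : x * E32 = E32 * x := mem6 E32 (by simp)
  have a3 : x * A3 = A3 * x := mem6 A3 (by simp)
  have a31 : x * A31 = A31 * x := mem6 A31 (by simp)
  have a32 : x * A32 = A32 * x := mem6 A32 (by simp)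
  have h3_2_5 := congrArg (fun m : M6 => m 2 5) h3
  have h31_0_3 := congrArg (fun m : M6 => m 0 3) h31
  have h31_0_5 := congrArg (fun m : M6 => m 0 5) h31
  have h31_1_3 := congrArg (fun m : M6 => m 1 3) h31
  have h31_1_5 := congrArg (fun m : M6 => m 1 5) h31
  have h31_2_0 := congrArg (fun m : M6 => m 2 0) h31
  have h31_2_1 := congrArg (fun m : M6 => m 2 1) h31
  have h31_2_2 := congrArg (fun m : M6 => m 2 2) h31
  have h31_2_3 := congrArg (fun m : M6 => m 2 3) h31
  have h31_2_4 := congrArg (fun m : M6 => m 2 4) h31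
  have h31_2_5 := congrArg (fun m : M6 => m 2 5) h31
  have h31_4_3 := congrArg (fun m : M6 => m 4 3) h31
  have h31_4_5 := congrArg (fun m : M6 => m 4 5) h31
  have h31_5_5 := congrArg (fun m : M6 => m 5 5) h31
  have h32_0_4 := congrArg (fun m : M6 => m 0 4) h32
  have h32_0_5 := congrArg (fun m : M6 => m 0 5) h32
  have h32_1_1 := congrArg (fun m : M6 => m 1 1) h32
  have h32_1_2 := congrArg (fun m : M6 => m 1 2) h32
  have h32_1_4 := congrArg (fun m : M6 => m 1 4) h32
  have h32_1_5 := congrArg (fun m : M6 => m 1 5) h32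
  have h32_2_1 := congrArg (fun m : M6 => m 2 1) h32
  have h32_2_3 := congrArg (fun m : M6 => m 2 3) h32
  have h32_2_4 := congrArg (fun m : M6 => m 2 4) h32
  have h32_2_5 := congrArg (fun m : M6 => m 2 5) h32
  have a3_0_5 := congrArg (fun m : M6 => m 0 5) a3
  have a3_1_5 := congrArg (fun m : M6 => m 1 5) a3
  have a3_2_0 := congrArg (fun m : M6 => m 2 0) a3
  have a3_2_1 := congrArg (fun m : M6 => m 2 1) a3
  have a3_2_3 := congrArg (fun m : M6 => m 2 3) a3
  have a3_2_4 := congrArg (fun m : M6 => m 2 4) a3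
  have a3_2_5 := congrArg (fun m : M6 => m 2 5) a3
  have a31_0_5 := congrArg (fun m : M6 => m 0 5) a31
  have a31_1_5 := congrArg (fun m : M6 => m 1 5) a31
  have a31_2_4 := congrArg (fun m : M6 => m 2 4) a31
  have a32_1_5 := congrArg (fun m : M6 => m 1 5) a32
  simp [Matrix.mul_apply, Fin.sum_univ_six, cons_val_five', Matrix.vecHead, Matrix.vecTail, Function.comp,
    E3, E31, E32, A3, A31, A32] at h3_2_5 h31_0_3 h31_0_5 h31_1_3 h31_1_5 h31_2_0 h31_2_1 h31_2_2 h31_2_3 h31_2_4 h31_2_5 h31_4_3 h31_4_5 h31_5_5 h32_0_4 h32_0_5 h32_1_1 h32_1_2 h32_1_4 h32_1_5 h32_2_1 h32_2_3 h32_2_4 h32_2_5 a3_0_5 a3_1_5 a3_2_0 a3_2_1 a3_2_3 a3_2_4 a3_2_5 a31_0_5 a31_1_5 a31_2_4 a32_1_5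
  have z_0_0 : x 0 0 = 0 := by linarith [h3_2_5, h31_0_5, h31_2_3, h32_1_5, h32_2_4, htr]
  have z_0_1 : x 0 1 = 0 := by linarith [h32_0_5]
  have z_0_2 : x 0 2 = 0 := by linarith [h32_0_4]
  have z_0_3 : x 0 3 = 0 := by linarith [a31_0_5]
  have z_0_4 : x 0 4 = 0 := by linarith [a31_2_4]
  have z_0_5 : x 0 5 = 0 := by linarith [a3_0_5]
  have z_1_0 : x 1 0 = 0 := by linarith [h31_1_5]
  have z_1_1 : x 1 1 = 0 := by linarith [h3_2_5, h31_0_5, h31_2_3, h32_1_5, h32_2_4, htr]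
  have z_1_2 : x 1 2 = 0 := by linarith [h31_1_3]
  have z_1_3 : x 1 3 = 0 := by linarith [a31_1_5]
  have z_1_4 : x 1 4 = 0 := by linarith [a32_1_5]
  have z_1_5 : x 1 5 = 0 := by linarith [a3_1_5]
  have z_2_0 : x 2 0 = 0 := by linarith [a3_2_0]
  have z_2_1 : x 2 1 = 0 := by linarith [a3_2_1]
  have z_2_2 : x 2 2 = 0 := by linarith [h3_2_5, h31_0_5, h31_2_3, h32_1_5, h32_2_4, htr]
  have z_2_3 : x 2 3 = 0 := by linarith [a3_2_3]
  have z_2_4 : x 2 4 = 0 := by linarith [a3_2_4]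
  have z_2_5 : x 2 5 = 0 := by linarith [a3_2_5]
  have z_3_0 : x 3 0 = 0 := by linarith [h31_2_0]
  have z_3_1 : x 3 1 = 0 := by linarith [h31_2_1]
  have z_3_2 : x 3 2 = 0 := by linarith [h31_2_2]
  have z_3_3 : x 3 3 = 0 := by linarith [h3_2_5, h31_0_5, h31_2_3, h32_1_5, h32_2_4, htr]
  have z_3_4 : x 3 4 = 0 := by linarith [h31_2_4]
  have z_3_5 : x 3 5 = 0 := by linarith [h31_2_5, a3_2_0]
  have z_4_0 : x 4 0 = 0 := by linarith [h31_4_5]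
  have z_4_1 : x 4 1 = 0 := by linarith [h32_2_1]
  have z_4_2 : x 4 2 = 0 := by linarith [h31_4_3]
  have z_4_3 : x 4 3 = 0 := by linarith [h32_2_3]
  have z_4_4 : x 4 4 = 0 := by linarith [h3_2_5, h31_0_5, h31_2_3, h32_1_5, h32_2_4, htr]
  have z_4_5 : x 4 5 = 0 := by linarith [h32_2_5, a3_2_1]
  have z_5_0 : x 5 0 = 0 := by linarith [h31_5_5]
  have z_5_1 : x 5 1 = 0 := by linarith [h32_1_1]
  have z_5_2 : x 5 2 = 0 := by linarith [h32_1_2]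
  have z_5_3 : x 5 3 = 0 := by linarith [h31_0_3, h32_0_4]
  have z_5_4 : x 5 4 = 0 := by linarith [h31_1_3, h32_1_4]
  have z_5_5 : x 5 5 = 0 := by linarith [h3_2_5, h31_0_5, h31_2_3, h32_1_5, h32_2_4, htr]
  ext i j
  fin_cases i <;> fin_cases j <;> simp only [Matrix.zero_apply] <;>
    first | exact z_0_0 | exact z_0_1 | exact z_0_2 | exact z_0_3 | exact z_0_4 | exact z_0_5 | exact z_1_0 | exact z_1_1 | exact z_1_2 | exact z_1_3 | exact z_1_4 | exact z_1_5 | exact z_2_0 | exact z_2_1 | exact z_2_2 | exact z_2_3 | exact z_2_4 | exact z_2_5 | exact z_3_0 | exact z_3_1 | exact z_3_2 | exact z_3_3 | exact z_3_4 | exact z_3_5 | exact z_4_0 | exact z_4_1 | exact z_4_2 | exact z_4_3 | exact z_4_4 | exact z_4_5 | exact z_5_0 | exact z_5_1 | exact z_5_2 | exact z_5_3 | exact z_5_4 | exact z_5_5
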